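/- Let k be a field and A a (possibly noncommutative) unital k-algebra with dim_k A ≥ 4. If for all x, y ∈ A one has dim_k(k·1 + kx + ky + kxy) ≤ 3, then either A = k ⊕ V with V·V = 0 for some subspace V, or A is isomorphic to the algebra of upper-triangular matrices [[k, V],[0, k]] for some k-vector space V. -/

import Mathlib

set_option linter.unusedSectionVars false
set_option maxHeartbeats 1000000

namespace Stmt19Aux
open Submodule
variable {k A : Type*} [Field k] [Ring A] [Algebra k A]

variable {k A : Type*} [Field k] [Ring A] [Algebra k A]

lemma smul_notmem_eq_zero {S : Set A} {c : k} {y : A} (hc : c • y ∈ span k S)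
    (hy : y ∉ span k S) : c = 0 := by
  by_contra hc0
  exact hy (by simpa [smul_smul, inv_mul_cancel₀ hc0] using
    Submodule.smul_mem _ c⁻¹ hc)

lemma mem_span_triple {a b c z : A} :
    z ∈ span k {a, b, c} ↔ ∃ α β γ : k, z = α • a + β • b + γ • c := by
  constructor
  · intro hz
    rw [show ({a,b,c} : Set A) = insert a {b,c} from rfl, mem_span_insert] at hz
    obtain ⟨α, w, hw, rfl⟩ := hz
    obtain ⟨β, γ, rfl⟩ := mem_span_pair.1 hw
    exact ⟨α, β, γ, by abel⟩
  · rintro ⟨α, β, γ, rfl⟩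
    exact add_mem (add_mem (smul_mem _ _ (subset_span (by simp)))
      (smul_mem _ _ (subset_span (by simp)))) (smul_mem _ _ (subset_span (by simp)))

lemma li3 {a b c : A} (ha : a ≠ 0) (hb : b ∉ span k {a}) (hc : c ∉ span k {a, b}) :
    LinearIndependent k ![a, b, c] := by
  rw [Fintype.linearIndependent_iff]
  intro g hg
  rw [Fin.sum_univ_three] at hg
  simp only [Matrix.cons_val_zero, Matrix.cons_val_one, Matrix.head_cons,
    Matrix.cons_val_two, Matrix.tail_cons] at hg
  have h2 : g 2 = 0 := by
    refine smul_notmem_eq_zero (c := g 2) (y := c) ?_ hc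
    have : g 2 • c = -(g 0 • a + g 1 • b) := by linear_combination (norm := module) hg
    rw [this]
    exact neg_mem (add_mem (smul_mem _ _ (subset_span (by simp)))
      (smul_mem _ _ (subset_span (by simp))))
  have h1 : g 1 = 0 := by
    refine smul_notmem_eq_zero (c := g 1) (y := b) ?_ hb
    have : g 1 • b = -(g 0 • a) - g 2 • c := by linear_combination (norm := module) hg
    rw [this, h2]
    simpa using neg_mem (smul_mem _ (g 0) (subset_span (Set.mem_singleton a)))
  have h0 : g 0 = 0 := by
    have := hg; rw [h1, h2] at this; simp at this
    rcases this with h | h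
    · exact h
    · exact absurd h ha
  intro i; fin_cases i <;> assumption

lemma li4 {a b c d : A} (ha : a ≠ 0) (hb : b ∉ span k {a}) (hc : c ∉ span k {a, b})
    (hd : d ∉ span k {a, b, c}) : LinearIndependent k ![a, b, c, d] := by
  rw [Fintype.linearIndependent_iff]
  intro g hg
  rw [Fin.sum_univ_four] at hg
  simp only [Matrix.cons_val_zero, Matrix.cons_val_one, Matrix.head_cons,
    Matrix.cons_val_two, Matrix.tail_cons, Matrix.cons_val_three] at hg
  have h3 : g 3 = 0 := by
    refine smul_notmem_eq_zero (c := g 3) (y := d) ?_ hd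
    have : g 3 • d = -(g 0 • a + g 1 • b + g 2 • c) := by
      linear_combination (norm := module) hg
    rw [this]
    exact neg_mem (mem_span_triple.2 ⟨g 0, g 1, g 2, rfl⟩)
  have hli := li3 ha hb hc
  rw [Fintype.linearIndependent_iff] at hli
  have := hli ![g 0, g 1, g 2] (by
    rw [Fin.sum_univ_three]
    simp only [Matrix.cons_val_zero, Matrix.cons_val_one, Matrix.head_cons,
      Matrix.cons_val_two, Matrix.tail_cons]
    rw [h3] at hg; linear_combination (norm := module) hg)
  intro i; fin_cases i
  · exact this 0
  · exact this 1
  · exact this 2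
  · exact h3
lemma card3 (a b c : A) : Cardinal.mk ({a, b, c} : Set A) ≤ 3 := by
  refine le_trans (Cardinal.mk_insert_le) ?_
  have h2 : Cardinal.mk ({b, c} : Set A) ≤ 2 := by
    refine le_trans (Cardinal.mk_insert_le) ?_
    rw [Cardinal.mk_singleton]
    norm_num
  calc Cardinal.mk ({b, c} : Set A) + 1 ≤ 2 + 1 := by
        exact add_le_add h2 le_rfl
    _ = 3 := by norm_num

lemma exists_notmem (hA : 4 ≤ Module.rank k A) (a b c : A) :
    ∃ v : A, v ∉ span k {a, b, c} := by
  by_contra hc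
  push_neg at hc
  have htop : span k ({a, b, c} : Set A) = ⊤ := eq_top_iff'.2 hc
  have h1 : Module.rank k (span k ({a, b, c} : Set A)) ≤ 3 :=
    le_trans (rank_span_le _) (card3 a b c)
  rw [htop, rank_top] at h1
  have := le_trans hA h1
  norm_num at this

lemma oneNZ (hA : 4 ≤ Module.rank k A) : (1 : A) ≠ 0 := by
  intro h1
  have : Subsingleton A := subsingleton_of_zero_eq_one h1.symm
  have h0 : Module.rank k A = 0 := rank_subsingleton' k A
  rw [h0] at hA
  norm_num at hA

lemma mem_span_of_rank_le {a b c d : A}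
    (ha : a ≠ 0) (hb : b ∉ span k {a}) (hc : c ∉ span k {a, b})
    (hr : Module.rank k (span k {a, b, c, d} : Submodule k A) ≤ 3) :
    d ∈ span k {a, b, c} := by
  by_contra hd
  have hli4 : LinearIndependent k ![a, b, c, d] := li4 ha hb hc hd
  set S : Submodule k A := span k {a, b, c, d} with hS
  have hmem : ∀ i : Fin 4, ![a, b, c, d] i ∈ S := by
    intro i; fin_cases i <;> exact subset_span (by simp [hS])
  have hli4' : LinearIndependent k (fun i : Fin 4 => (⟨![a,b,c,d] i, hmem i⟩ : S)) := by
    apply LinearIndependent.of_comp S.subtype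
    exact hli4
  have hle := hli4'.cardinal_lift_le_rank
  simp only [Cardinal.mk_fin, Cardinal.lift_ofNat, Nat.cast_ofNat] at hle
  have h3 : Cardinal.lift.{0} (Module.rank k (S : Submodule k A)) ≤ 3 := by
    simpa using hr
  have := le_trans hle h3
  norm_num at this


section Main
variable (hA : 4 ≤ Module.rank k A)
  (h : ∀ x y : A, Module.rank k
      (Submodule.span k {(1 : A), x, y, x * y} : Submodule k A) ≤ 3)

include hA h
variable (hA : 4 ≤ Module.rank k A)
  (h : ∀ x y : A, Module.rank k
      (Submodule.span k {(1 : A), x, y, x * y} : Submodule k A) ≤ 3)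

include hA h

lemma mul_mem_span {x y : A} (hx : x ∉ span k {(1:A)}) (hy : y ∉ span k {(1:A), x}) :
    x * y ∈ span k {(1:A), x, y} ∧ y * x ∈ span k {(1:A), x, y} := by
  have h1 : (1:A) ≠ 0 := oneNZ hA
  constructor
  · exact mem_span_of_rank_le h1 hx hy (h x y)
  · have hxy : x ∉ span k {(1:A), y} := by
      intro hmem
      obtain ⟨a, b, hab⟩ := mem_span_pair.1 hmem
      have hb : b ≠ 0 := by
        rintro rfl
        exact hx (mem_span_singleton.2 ⟨a, by simpa using hab⟩)
      refine hy (mem_span_pair.2 ⟨-(b⁻¹ * a), b⁻¹, ?_⟩)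
      rw [← hab, smul_add, smul_smul, smul_smul, inv_mul_cancel₀ hb, one_smul]
      module
    have hyx : y ∉ span k {(1:A)} := fun hmem =>
      hy (span_mono (by simp [Set.subset_def]) hmem : y ∈ span k {(1:A), x})
    have h2 := mem_span_of_rank_le h1 hyx hxy (h y x)
    refine span_le.2 ?_ h2
    rintro z (rfl | rfl | rfl) <;> exact subset_span (by simp)

lemma sq_mem (x : A) : x * x ∈ span k {(1:A), x} := by
  have h1 : (1:A) ≠ 0 := oneNZ hA
  by_cases hx : x ∈ span k {(1:A)}
  · obtain ⟨c, rfl⟩ := mem_span_singleton.1 hx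
    have : (c • (1:A)) * (c • (1:A)) = (c*c) • (1:A) := by
      rw [smul_mul_assoc, mul_smul_comm, one_mul, smul_smul]
    rw [this]
    exact smul_mem _ _ (subset_span (by simp))
  · obtain ⟨w, hw⟩ : ∃ w, w ∉ span k {(1:A), x} := by
      obtain ⟨w, hw⟩ := exists_notmem hA (1:A) x x
      exact ⟨w, by simpa using hw⟩
    obtain ⟨w', hw'⟩ := exists_notmem hA (1:A) x w
    have hxw : x * w ∈ span k {(1:A), x, w} := (mul_mem_span hA h hx hw).1
    have hw'2 : w' ∉ span k {(1:A), x} := fun hc =>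
      hw' (span_mono (by simp [Set.subset_def]) hc)
    have hxw' : x * w' ∈ span k {(1:A), x, w'} := (mul_mem_span hA h hx hw'2).1
    have hxpw : x + w ∉ span k {(1:A), x} := fun hc => hw (by
      have := sub_mem hc (subset_span (show x ∈ ({(1:A),x} : Set A) by simp))
      simpa using this)
    have h2 : x * (x + w) ∈ span k {(1:A), x, w} := by
      have := (mul_mem_span hA h hx hxpw).1
      refine span_le.2 ?_ this
      rintro z (rfl | rfl | rfl)
      · exact subset_span (by simp)
      · exact subset_span (by simp)
      · exact add_mem (subset_span (by simp)) (subset_span (by simp))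
    have hx2w : x * x ∈ span k {(1:A), x, w} := by
      have hh : x * x = x * (x + w) - x * w := by rw [mul_add]; abel
      rw [hh]; exact sub_mem h2 hxw
    have hxpw' : x + w' ∉ span k {(1:A), x} := fun hc => hw'2 (by
      have := sub_mem hc (subset_span (show x ∈ ({(1:A),x} : Set A) by simp))
      simpa using this)
    have h2' : x * (x + w') ∈ span k {(1:A), x, w'} := by
      have := (mul_mem_span hA h hx hxpw').1
      refine span_le.2 ?_ this
      rintro z (rfl | rfl | rfl)
      · exact subset_span (by simp)
      · exact subset_span (by simp)
      · exact add_mem (subset_span (by simp)) (subset_span (by simp))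
    have hx2w' : x * x ∈ span k {(1:A), x, w'} := by
      have hh : x * x = x * (x + w') - x * w' := by rw [mul_add]; abel
      rw [hh]; exact sub_mem h2' hxw'
    obtain ⟨a, b, c, hc1⟩ := mem_span_triple.1 hx2w
    obtain ⟨a', b', c', hc2⟩ := mem_span_triple.1 hx2w'
    have hcc : c • w ∈ span k {(1:A), x, w'} := by
      have heq := hc1.symm.trans hc2
      have hh : c • w = a' • (1:A) + b' • x + c' • w' - a • (1:A) - b • x := by
        linear_combination (norm := module) heq
      rw [hh]
      refine sub_mem (sub_mem (mem_span_triple.2 ⟨a', b', c', rfl⟩) ?_) ?_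
      · exact smul_mem _ _ (subset_span (by simp))
      · exact smul_mem _ _ (subset_span (by simp))
    have hc0 : c = 0 := smul_notmem_eq_zero hcc (by
      intro hmem
      obtain ⟨p, q, r, hpqr⟩ := mem_span_triple.1 hmem
      have hr : r ≠ 0 := by
        rintro rfl
        exact hw (mem_span_pair.2 ⟨p, q, by rw [hpqr]; module⟩)
      refine hw' (mem_span_triple.2 ⟨-(r⁻¹*p), -(r⁻¹*q), r⁻¹, ?_⟩)
      rw [hpqr, smul_add, smul_add, smul_smul, smul_smul, smul_smul, inv_mul_cancel₀ hr, one_smul]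
      module)
    rw [hc0] at hc1
    exact mem_span_pair.2 ⟨a, b, by rw [hc1]; module⟩

end Main

section Functional
variable (hA : 4 ≤ Module.rank k A) (m : A → A → A)
  (hm1 : ∀ y, m 1 y = y)
  (hm1' : ∀ x, m x 1 = x)
  (hma : ∀ x y z, m x (y + z) = m x y + m x z)
  (hms : ∀ (c : k) x y, m x (c • y) = c • m x y)
  (hma' : ∀ x y z, m (x + y) z = m x z + m y z)
  (hms' : ∀ (c : k) x y, m (c • x) y = c • m x y)
  (hsq : ∀ x, m x x ∈ span k {(1:A), x})
  (hspec : ∀ x y, x ∉ span k {(1:A)} → y ∉ span k {(1:A), x} → m x y ∈ span k {(1:A), x, y})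

include hA hm1 hm1' hma hms hma' hms' hsq hspec

lemma hUmem : ∀ x y, y ∈ span k {(1:A), x} → m x y ∈ span k {(1:A), x} := by
  intro x y hy
  obtain ⟨a, b, rfl⟩ := mem_span_pair.1 hy
  have he : m x (a • (1:A) + b • x) = a • x + b • m x x := by
    rw [hma, hms, hms, hm1']
  rw [he]
  exact add_mem (smul_mem _ _ (subset_span (by simp))) (smul_mem _ _ (hsq x))

-- extraction of the scalar for a single y
lemma l_ext {x y : A} (hx : x ∉ span k {(1:A)}) (hy : y ∉ span k {(1:A), x}) :
    ∃ l : k, m x y - l • y ∈ span k {(1:A), x} := by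
  obtain ⟨α, β, γ, hz⟩ := mem_span_triple.1 (hspec x y hx hy)
  exact ⟨γ, by rw [hz]; exact mem_span_pair.2 ⟨α, β, by module⟩⟩

lemma l_unique {x y : A} (hy : y ∉ span k {(1:A), x}) {l l' : k}
    (hl : m x y - l • y ∈ span k {(1:A), x}) (hl' : m x y - l' • y ∈ span k {(1:A), x}) :
    l = l' := by
  have : (l' - l) • y ∈ span k {(1:A), x} := by
    have := sub_mem hl hl'
    have he : m x y - l • y - (m x y - l' • y) = (l' - l) • y := by module
    rwa [he] at this
  have := smul_notmem_eq_zero this hy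
  exact (sub_eq_zero.1 this).symm

lemma exists_l : ∀ x : A, ∃ l : k, ∀ y, m x y - l • y ∈ span k {(1:A), x} := by
  intro x
  by_cases hx : x ∈ span k {(1:A)}
  · obtain ⟨c, rfl⟩ := mem_span_singleton.1 hx
    refine ⟨c, fun y => ?_⟩
    have he : m (c • (1:A)) y - c • y = 0 := by rw [hms', hm1]; module
    rw [he]; exact zero_mem _
  · obtain ⟨y₀, hy₀⟩ : ∃ y₀, y₀ ∉ span k {(1:A), x} := by
      obtain ⟨w, hw⟩ := exists_notmem hA (1:A) x x
      exact ⟨w, by simpa using hw⟩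
    obtain ⟨l, hl⟩ := l_ext hA m hm1 hm1' hma hms hma' hms' hsq hspec hx hy₀
    refine ⟨l, fun y => ?_⟩
    by_cases hy : y ∈ span k {(1:A), x}
    · exact sub_mem (hUmem hA m hm1 hm1' hma hms hma' hms' hsq hspec x y hy) (smul_mem _ _ hy)
    · by_cases hyy : y ∈ span k {(1:A), x, y₀}
      · obtain ⟨α, β, γ, hz⟩ := mem_span_triple.1 hyy
        have he : m x y - l • y =
            α • (x - l • (1:A)) + β • (m x x - l • x) + γ • (m x y₀ - l • y₀) := by
          rw [hz, hma, hma, hms, hms, hms, hm1']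
          module
        rw [he]
        refine add_mem (add_mem (smul_mem _ _ ?_) (smul_mem _ _ ?_)) (smul_mem _ _ ?_)
        · exact sub_mem (subset_span (by simp)) (smul_mem _ _ (subset_span (by simp)))
        · exact sub_mem (hsq x) (smul_mem _ _ (subset_span (by simp)))
        · exact hl
      · -- y ∉ span {1,x,y₀}
        obtain ⟨l', hl'⟩ := l_ext hA m hm1 hm1' hma hms hma' hms' hsq hspec hx hy
        obtain ⟨l'', hl''⟩ := l_ext hA m hm1 hm1' hma hms hma' hms' hsq hspec hx (show y₀ + y ∉ span k {(1:A), x} by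
          intro hc
          exact hyy (by
            have : y = (y₀ + y) - y₀ := by abel
            rw [this]
            exact sub_mem (span_mono (by simp [Set.subset_def]) hc)
              (subset_span (by simp))))
        -- m x (y₀+y) = m x y₀ + m x y
        have hkey : (l - l'') • y₀ + (l' - l'') • y ∈ span k {(1:A), x} := by
          have h3 := hl''
          rw [hma] at h3
          have he : (l - l'') • y₀ + (l' - l'') • y =
              (m x y₀ + m x y - l'' • (y₀ + y)) - (m x y₀ - l • y₀) - (m x y - l' • y) := by
            module
          rw [he]
          exact sub_mem (sub_mem h3 hl) hl'
        have hly : (l' - l'') • y ∈ span k {(1:A), x, y₀} := by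
          have he : (l' - l'') • y = ((l - l'') • y₀ + (l' - l'') • y) - (l - l'') • y₀ := by
            module
          rw [he]
          exact sub_mem (span_mono (by simp [Set.subset_def]) hkey)
            (smul_mem _ _ (subset_span (by simp)))
        have h1 : l' = l'' := sub_eq_zero.1 (smul_notmem_eq_zero hly hyy)
        have hly₀ : (l - l'') • y₀ ∈ span k {(1:A), x} := by
          have he : (l - l'') • y₀ = ((l - l'') • y₀ + (l' - l'') • y) - (l' - l'') • y := by
            module
          rw [he]
          refine sub_mem hkey ?_
          rw [h1]
          simp
        have h2 : l = l'' := sub_eq_zero.1 (smul_notmem_eq_zero hly₀ hy₀)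
        rw [h2, ← h1]
        exact hl'

end Functional

section F2
variable (hA : 4 ≤ Module.rank k A) (m : A → A → A)
  (hm1 : ∀ y, m 1 y = y)
  (hm1' : ∀ x, m x 1 = x)
  (hma : ∀ x y z, m x (y + z) = m x y + m x z)
  (hms : ∀ (c : k) x y, m x (c • y) = c • m x y)
  (hma' : ∀ x y z, m (x + y) z = m x z + m y z)
  (hms' : ∀ (c : k) x y, m (c • x) y = c • m x y)
  (hsq : ∀ x, m x x ∈ span k {(1:A), x})
  (hspec : ∀ x y, x ∉ span k {(1:A)} → y ∉ span k {(1:A), x} → m x y ∈ span k {(1:A), x, y})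

include hA hm1 hm1' hma hms hma' hms' hsq hspec in
lemma exists_functional : ∃ L : A →ₗ[k] k, L 1 = 1 ∧
    ∀ x y, m x y - L x • y ∈ span k {(1:A), x} := by
  have EX := exists_l hA m hm1 hm1' hma hms hma' hms' hsq hspec
  set lam : A → k := fun x => Classical.choose (EX x) with hlam
  have spec : ∀ x y, m x y - lam x • y ∈ span k {(1:A), x} :=
    fun x => Classical.choose_spec (EX x)
  have hadd : ∀ x x', lam (x + x') = lam x + lam x' := by
    intro x x'
    obtain ⟨y, hy⟩ := exists_notmem hA (1:A) x x'
    have hsub : span k ({(1:A), x + x'} : Set A) ≤ span k {(1:A), x, x'} := by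
      rw [span_le]
      rintro z (rfl | rfl)
      · exact subset_span (by simp)
      · exact add_mem (subset_span (by simp)) (subset_span (by simp))
    have hx : span k ({(1:A), x} : Set A) ≤ span k {(1:A), x, x'} :=
      span_mono (by simp [Set.subset_def])
    have hx' : span k ({(1:A), x'} : Set A) ≤ span k {(1:A), x, x'} :=
      span_mono (by simp [Set.subset_def])
    have hmem : (lam x + lam x' - lam (x + x')) • y ∈ span k {(1:A), x, x'} := by
      have he : (lam x + lam x' - lam (x + x')) • y =
          (m (x + x') y - lam (x + x') • y) - (m x y - lam x • y) - (m x' y - lam x' • y) := by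
        rw [hma']; module
      rw [he]
      exact sub_mem (sub_mem (hsub (spec (x + x') y)) (hx (spec x y))) (hx' (spec x' y))
    have := smul_notmem_eq_zero hmem hy
    exact (sub_eq_zero.1 this).symm
  have hsmul : ∀ (c : k) x, lam (c • x) = c * lam x := by
    intro c x
    obtain ⟨y, hy⟩ : ∃ y, y ∉ span k {(1:A), x} := by
      obtain ⟨y, hy⟩ := exists_notmem hA (1:A) x x
      exact ⟨y, by simpa using hy⟩
    have hsub : span k ({(1:A), c • x} : Set A) ≤ span k {(1:A), x} := by
      rw [span_le]
      rintro z (rfl | rfl)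
      · exact subset_span (by simp)
      · exact smul_mem _ _ (subset_span (by simp))
    have hmem : (c * lam x - lam (c • x)) • y ∈ span k {(1:A), x} := by
      have he : (c * lam x - lam (c • x)) • y =
          (m (c • x) y - lam (c • x) • y) - c • (m x y - lam x • y) := by
        rw [hms']; module
      rw [he]
      exact sub_mem (hsub (spec (c • x) y)) (smul_mem _ _ (spec x y))
    have := smul_notmem_eq_zero hmem hy
    exact (sub_eq_zero.1 this).symm
  have h1 : lam 1 = 1 := by
    obtain ⟨y, hy⟩ : ∃ y, y ∉ span k {(1:A), (1:A)} := by
      obtain ⟨y, hy⟩ := exists_notmem hA (1:A) (1:A) (1:A)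
      exact ⟨y, by simpa using hy⟩
    have hmem : (lam 1 - 1) • y ∈ span k {(1:A), (1:A)} := by
      have he : (lam 1 - 1) • y = (m 1 y - 1 • y) - (m 1 y - lam 1 • y) := by module
      rw [he]
      refine sub_mem ?_ (spec 1 y)
      rw [hm1]
      simp
    have := smul_notmem_eq_zero hmem hy
    exact sub_eq_zero.1 this
  exact ⟨{ toFun := lam,
           map_add' := hadd,
           map_smul' := by intro c x; simpa using hsmul c x }, h1, spec⟩
end F2


lemma coeffs3 {a b c : A} (h : LinearIndependent k ![a, b, c]) {α β γ : k}
    (he : α • a + β • b + γ • c = 0) : α = 0 ∧ β = 0 ∧ γ = 0 := by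
  rw [Fintype.linearIndependent_iff] at h
  have := h ![α, β, γ] (by
    rw [Fin.sum_univ_three]
    simpa using he)
  exact ⟨this 0, this 1, this 2⟩

lemma F3 (Λ Ρ : A →ₗ[k] k)
    (hΛ : ∀ x y, x * y - Λ x • y ∈ span k {(1:A), x})
    (hΡ : ∀ x y, y * x - Ρ x • y ∈ span k {(1:A), x})
    {x y : A} (hy : y ∉ span k {(1:A), x}) :
    x * y - Λ x • y - Ρ y • x ∈ span k {(1:A)} := by
  have h1 : x * y - Λ x • y - Ρ y • x ∈ span k {(1:A), x} :=
    sub_mem (hΛ x y) (smul_mem _ _ (subset_span (by simp)))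
  have h2 : x * y - Λ x • y - Ρ y • x ∈ span k {(1:A), y} := by
    have := hΡ y x
    have he : x * y - Λ x • y - Ρ y • x = (x * y - Ρ y • x) - Λ x • y := by module
    rw [he]
    exact sub_mem this (smul_mem _ _ (subset_span (by simp)))
  obtain ⟨p, q, hpq⟩ := mem_span_pair.1 h1
  obtain ⟨p', q', hpq'⟩ := mem_span_pair.1 h2
  have hq : q' • y ∈ span k {(1:A), x} := by
    have he : q' • y = p • (1:A) + q • x - p' • (1:A) := by
      rw [← hpq'] at hpq
      linear_combination (norm := module) -hpq
    rw [he]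
    exact sub_mem (mem_span_pair.2 ⟨p, q, rfl⟩) (smul_mem _ _ (subset_span (by simp)))
  have hq0 : q' = 0 := smul_notmem_eq_zero hq hy
  rw [hq0] at hpq'
  exact mem_span_singleton.2 ⟨p', by rw [← hpq']; module⟩

lemma VVzero (Λ Ρ : A →ₗ[k] k) (hΛ1 : Λ 1 = 1)
    (hΛ : ∀ x y, x * y - Λ x • y ∈ span k {(1:A), x})
    (hΡ : ∀ x y, y * x - Ρ x • y ∈ span k {(1:A), x})
    (V : Submodule k A)
    (hVk : ∀ v ∈ V, Λ v = 0 ∧ Ρ v = 0)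
    (hout : ∀ w : A, ∃ u ∈ V, u ∉ span k {(1:A), w}) :
    ∀ v ∈ V, ∀ w ∈ V, v * w = 0 := by
  have step0 : ∀ v ∈ V, ∀ w ∈ V, w ∉ span k {(1:A), v} → v * w ∈ span k {(1:A)} := by
    intro v hv w hw hwn
    have := F3 Λ Ρ hΛ hΡ hwn
    rw [(hVk v hv).1, (hVk w hw).2] at this
    simpa using this
  have stepsq : ∀ v ∈ V, v * v ∈ span k {(1:A)} := by
    intro v hv
    obtain ⟨u, hu, huo⟩ := hout v
    have hvu : v + u ∉ span k {(1:A), v} := fun hc => huo (by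
      have := sub_mem hc (subset_span (show v ∈ ({(1:A), v} : Set A) by simp))
      simpa using this)
    have h1 := step0 v hv (v + u) (add_mem hv hu) hvu
    have h2 := step0 v hv u hu huo
    have he : v * v = v * (v + u) - v * u := by rw [mul_add]; abel
    rw [he]
    exact sub_mem h1 h2
  have step1 : ∀ v ∈ V, ∀ w ∈ V, v * w ∈ span k {(1:A)} := by
    intro v hv w hw
    by_cases hwn : w ∈ span k {(1:A), v}
    · obtain ⟨a, b, hab⟩ := mem_span_pair.1 hwn
      have ha : a = 0 := by
        have := congrArg Λ hab
        simp only [map_add, map_smul, hΛ1, smul_eq_mul, mul_one, (hVk v hv).1,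
          (hVk w hw).1, mul_zero, add_zero] at this
        exact this
      rw [ha] at hab
      simp only [zero_smul, zero_add] at hab
      rw [← hab, mul_smul_comm]
      exact smul_mem _ _ (stepsq v hv)
    · exact step0 v hv w hw hwn
  intro v hv w hw
  obtain ⟨u, hu, huo⟩ := hout w
  obtain ⟨α, hα⟩ := mem_span_singleton.1 (step1 u hu v hv)
  obtain ⟨γ, hγ⟩ := mem_span_singleton.1 (step1 v hv w hw)
  have hassoc : α • w = γ • u := by
    calc α • w = (α • (1:A)) * w := by rw [smul_mul_assoc, one_mul]
    _ = (u * v) * w := by rw [hα]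
    _ = u * (v * w) := mul_assoc u v w
    _ = u * (γ • (1:A)) := by rw [hγ]
    _ = γ • u := by rw [mul_smul_comm, mul_one]
  have hγ0 : γ = 0 := by
    by_contra hγ0
    refine huo (span_mono (show ({w} : Set A) ⊆ {(1:A), w} by simp) ?_)
    rw [show u = γ⁻¹ • (α • w) by rw [hassoc, smul_smul, inv_mul_cancel₀ hγ0, one_smul]]
    exact smul_mem _ _ (smul_mem _ _ (subset_span rfl))
  rw [← hγ, hγ0, zero_smul]


end Stmt19Aux

open Submodule in
/-- Let `k` be a field and `A` a (possibly noncommutative) unital `k`-algebra with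
`dim_k A ≥ 4`. If `dim_k(k·1 + kx + ky + kxy) ≤ 3` for all `x, y ∈ A`, then either
`A = k ⊕ V` with `V·V = 0`, or `A ≅ [[k, V],[0, k]]`, i.e. `A = ke ⊕ kf ⊕ V` with `e`, `f`
orthogonal idempotents summing to `1` and `eV = Vf = 0`, `V·V = 0`. -/
theorem stmt19 (k A : Type*) [Field k] [Ring A] [Algebra k A]
    (hA : 4 ≤ Module.rank k A)
    (h : ∀ x y : A, Module.rank k
      (Submodule.span k {(1 : A), x, y, x * y} : Submodule k A) ≤ 3) :
    (∃ V : Submodule k A,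
      Submodule.span k {(1 : A)} ⊔ V = ⊤ ∧
      Submodule.span k {(1 : A)} ⊓ V = ⊥ ∧
      ∀ v ∈ V, ∀ w ∈ V, v * w = 0) ∨
    (∃ (V : Submodule k A) (e f : A),
      e + f = 1 ∧ e * e = e ∧ f * f = f ∧ e * f = 0 ∧ f * e = 0 ∧
      (∀ v ∈ V, e * v = 0 ∧ v * f = 0) ∧
      (∀ v ∈ V, ∀ w ∈ V, v * w = 0) ∧
      Submodule.span k {e} ⊔ Submodule.span k {f} ⊔ V = ⊤ ∧
      Submodule.span k {e} ⊓ (Submodule.span k {f} ⊔ V) = ⊥ ∧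
      Submodule.span k {f} ⊓ (Submodule.span k {e} ⊔ V) = ⊥ ∧
      V ⊓ (Submodule.span k {e} ⊔ Submodule.span k {f}) = ⊥) := by
  classical
  obtain ⟨Λ, hΛ1, hΛ⟩ := Stmt19Aux.exists_functional hA (fun a b => a * b)
    (fun y => one_mul y) (fun x => mul_one x) (fun x y z => mul_add x y z)
    (fun c x y => mul_smul_comm c x y) (fun x y z => add_mul x y z)
    (fun c x y => smul_mul_assoc c x y) (Stmt19Aux.sq_mem hA h)
    (fun x y hx hy => (Stmt19Aux.mul_mem_span hA h hx hy).1)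
  obtain ⟨Ρ, hΡ1, hΡ⟩ := Stmt19Aux.exists_functional hA (fun a b => b * a)
    (fun y => mul_one y) (fun x => one_mul x) (fun x y z => add_mul y z x)
    (fun c x y => smul_mul_assoc c y x) (fun x y z => mul_add z x y)
    (fun c x y => mul_smul_comm c y x) (Stmt19Aux.sq_mem hA h)
    (fun x y hx hy => (Stmt19Aux.mul_mem_span hA h hx hy).2)
  by_cases hcase : ∀ x, Λ x = Ρ x
  · -- Case 1 : A = k ⊕ V
    left
    refine ⟨LinearMap.ker Λ, ?_, ?_, ?_⟩
    · rw [eq_top_iff']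
      intro a
      rw [Submodule.mem_sup]
      refine ⟨Λ a • 1, smul_mem _ _ (subset_span rfl), a - Λ a • 1, ?_, by abel⟩
      rw [LinearMap.mem_ker, map_sub, map_smul, hΛ1, smul_eq_mul, mul_one, sub_self]
    · rw [eq_bot_iff]
      rintro z ⟨hz1, hz2⟩
      obtain ⟨c, hc⟩ := mem_span_singleton.1 hz1
      have hz2' : Λ z = 0 := hz2
      rw [← hc, map_smul, hΛ1, smul_eq_mul, mul_one] at hz2'
      rw [← hc, hz2', zero_smul]
      exact zero_mem _
    · refine Stmt19Aux.VVzero Λ Ρ hΛ1 hΛ hΡ _ (fun v hv => ⟨hv, by rw [← hcase v]; exact hv⟩) ?_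
      intro w
      obtain ⟨y, hy⟩ := Stmt19Aux.exists_notmem hA (1:A) (1:A) w
      have hy' : y ∉ span k {(1:A), w} := fun hc => hy (by
        refine span_le.2 ?_ hc
        rintro z (rfl | rfl) <;> exact subset_span (by simp))
      refine ⟨y - Λ y • 1, ?_, ?_⟩
      · rw [LinearMap.mem_ker, map_sub, map_smul, hΛ1, smul_eq_mul, mul_one, sub_self]
      · intro hc
        refine hy' ?_
        have : y = (y - Λ y • 1) + Λ y • 1 := by abel
        rw [this]
        exact add_mem hc (smul_mem _ _ (subset_span (by simp)))
  · -- Case 2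
    right
    push_neg at hcase
    obtain ⟨z, hz⟩ := hcase
    set t : k := (Λ z - Ρ z)⁻¹ with ht
    set e : A := t • (z - Ρ z • 1) with he
    have htnz : Λ z - Ρ z ≠ 0 := sub_ne_zero.2 hz
    have hΛe : Λ e = 1 := by
      rw [he, map_smul, map_sub, map_smul, hΛ1, smul_eq_mul, smul_eq_mul, mul_one, ht]
      field_simp
    have hΡe : Ρ e = 0 := by
      rw [he, map_smul, map_sub, map_smul, hΡ1, smul_eq_mul, smul_eq_mul, mul_one]
      simp
    clear he
    clear_value e
    set f : A := 1 - e with hf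
    have hΛf : Λ f = 0 := by rw [hf, map_sub, hΛ1, hΛe, sub_self]
    have hΡf : Ρ f = 1 := by rw [hf, map_sub, hΡ1, hΡe, sub_zero]
    set V : Submodule k A := LinearMap.ker Λ ⊓ LinearMap.ker Ρ with hV
    have memV : ∀ v ∈ V, Λ v = 0 ∧ Ρ v = 0 := by
      intro v hv
      rw [hV, Submodule.mem_inf, LinearMap.mem_ker, LinearMap.mem_ker] at hv
      exact hv
    have h1nz : (1:A) ≠ 0 := Stmt19Aux.oneNZ hA
    have k1nz : (1:k) ≠ 0 := one_ne_zero
    have henk : e ∉ span k {(1:A)} := by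
      intro hc
      obtain ⟨c, hc⟩ := mem_span_singleton.1 hc
      have h1 : Λ e = c := by rw [← hc, map_smul, hΛ1, smul_eq_mul, mul_one]
      have h2 : Ρ e = c := by rw [← hc, map_smul, hΡ1, smul_eq_mul, mul_one]
      rw [hΛe] at h1; rw [hΡe] at h2
      exact k1nz (h1.trans h2.symm)
    have hv_not : ∀ v ∈ V, v ≠ 0 → v ∉ span k {(1:A), e} := by
      intro v hv hv0 hc
      obtain ⟨a, b, hab⟩ := mem_span_pair.1 hc
      obtain ⟨hΛv, hΡv⟩ := memV v hv
      have h1 : a + b = 0 := by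
        have := congrArg Λ hab
        simpa [hΛ1, hΛe, hΛv] using this
      have h2 : a = 0 := by
        have := congrArg Ρ hab
        simpa [hΡ1, hΡe, hΡv] using this
      rw [h2] at h1
      simp only [zero_add] at h1
      rw [h1, h2] at hab
      exact hv0 (by rw [← hab]; simp)
    have he_not : ∀ v ∈ V, e ∉ span k {(1:A), v} := by
      intro v hv hc
      obtain ⟨a, b, hab⟩ := mem_span_pair.1 hc
      obtain ⟨hΛv, hΡv⟩ := memV v hv
      have h1 : a = 1 := by
        have := congrArg Λ hab
        simpa [hΛ1, hΛe, hΛv] using this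
      have h2 : a = 0 := by
        have := congrArg Ρ hab
        simpa [hΡ1, hΡe, hΡv] using this
      rw [h1] at h2
      exact k1nz h2
    have hout2 : ∀ w : A, ∃ u ∈ V, u ∉ span k {(1:A), w} := by
      intro w
      obtain ⟨y, hy⟩ := Stmt19Aux.exists_notmem hA (1:A) e w
      refine ⟨y - Λ y • e - Ρ y • f, ?_, ?_⟩
      · rw [hV, Submodule.mem_inf, LinearMap.mem_ker, LinearMap.mem_ker]
        constructor
        · rw [map_sub, map_sub, map_smul, map_smul, hΛe, hΛf, smul_eq_mul, smul_eq_mul]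
          ring
        · rw [map_sub, map_sub, map_smul, map_smul, hΡe, hΡf, smul_eq_mul, smul_eq_mul]
          ring
      · intro hc
        refine hy ?_
        have hrw : y = (y - Λ y • e - Ρ y • f) + (Ρ y) • (1:A) + (Λ y - Ρ y) • e := by
          rw [hf]; module
        rw [hrw]
        have hsub : span k ({(1:A), w} : Set A) ≤ span k {(1:A), e, w} :=
          span_mono (by simp [Set.subset_def])
        refine add_mem (add_mem (hsub hc) ?_) ?_
        · exact smul_mem _ _ (subset_span (by simp))
        · exact smul_mem _ _ (subset_span (by simp))
    -- get a nonzero element of V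
    obtain ⟨v₀, hv₀V, hv₀⟩ := hout2 0
    have hv₀0 : v₀ ≠ 0 := by
      rintro rfl
      exact hv₀ (zero_mem _)
    -- square of e
    obtain ⟨ν, τ, hsqe⟩ := mem_span_pair.1 (Stmt19Aux.sq_mem hA h e)
    -- the two associativity computations
    have hli : ∀ v ∈ V, v ≠ 0 → LinearIndependent k ![(1:A), e, v] := by
      intro v hv hv0
      exact Stmt19Aux.li3 h1nz henk (hv_not v hv hv0)
    have hstep : ∀ v ∈ V, v ≠ 0 → (e * v = v ∧ v * e = 0 ∧ ν + τ = 1 ∧ ν = 0) := by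
      intro v hv hv0
      obtain ⟨hΛv, hΡv⟩ := memV v hv
      have h3 := Stmt19Aux.F3 Λ Ρ hΛ hΡ (hv_not v hv hv0)
      rw [hΛe, hΡv] at h3
      simp only [one_smul, zero_smul, sub_zero] at h3
      obtain ⟨c, hc⟩ := mem_span_singleton.1 h3
      -- hc : c • 1 = e * v - v
      have h4 := Stmt19Aux.F3 Λ Ρ hΛ hΡ (he_not v hv)
      rw [hΛv, hΡe] at h4
      simp only [zero_smul, sub_zero] at h4
      obtain ⟨d, hd⟩ := mem_span_singleton.1 h4
      -- hd : d • 1 = v * e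
      have ha1 : (τ * c - c) • (1:A) + (-c) • e + (ν + τ - 1) • v = 0 := by
        have hassoc : (e * e) * v = e * (e * v) := mul_assoc e e v
        rw [← hsqe] at hassoc
        have hev : e * v = v + c • 1 := by linear_combination (norm := module) -hc
        rw [hev] at hassoc
        have hL : (ν • (1:A) + τ • e) * v = ν • v + τ • v + (τ * c) • 1 := by
          rw [add_mul, smul_mul_assoc, smul_mul_assoc, one_mul, hev, smul_add, smul_smul]
          abel
        have hR : e * (v + c • 1) = v + c • 1 + c • e := by
          rw [mul_add, mul_smul_comm, mul_one, hev]
        rw [hL, hR] at hassoc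
        linear_combination (norm := module) hassoc
      obtain ⟨hc1, hc2, hc3⟩ := Stmt19Aux.coeffs3 (hli v hv hv0) ha1
      have hc0 : c = 0 := by linear_combination -hc2
      have hnt : ν + τ = 1 := by linear_combination hc3
      have ha2 : (τ * d) • (1:A) + (-d) • e + ν • v = 0 := by
        have hassoc : (v * e) * e = v * (e * e) := mul_assoc v e e
        rw [← hsqe, ← hd] at hassoc
        have hL : (d • (1:A)) * e = d • e := by rw [smul_mul_assoc, one_mul]
        have hR : v * (ν • (1:A) + τ • e) = ν • v + (τ * d) • 1 := by
          rw [mul_add, mul_smul_comm, mul_smul_comm, mul_one, ← hd, smul_smul]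
        rw [hL, hR] at hassoc
        linear_combination (norm := module) -hassoc
      obtain ⟨hd1, hd2, hd3⟩ := Stmt19Aux.coeffs3 (hli v hv hv0) ha2
      have hd0 : d = 0 := by linear_combination -hd2
      refine ⟨?_, ?_, hnt, hd3⟩
      · rw [hc0] at hc
        have : (0:k) • (1:A) = 0 := zero_smul _ _
        rw [this] at hc
        linear_combination (norm := module) -hc
      · rw [hd0] at hd
        rw [← hd, zero_smul]
    have hτ : τ = 1 := by
      obtain ⟨_, _, hnt, hν⟩ := hstep v₀ hv₀V hv₀0
      rw [hν] at hnt
      linear_combination hnt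
    have hν0 : ν = 0 := (hstep v₀ hv₀V hv₀0).2.2.2
    have hee : e * e = e := by
      rw [← hsqe, hν0, hτ]
      simp
    have hev : ∀ v ∈ V, e * v = v := by
      intro v hv
      rcases eq_or_ne v 0 with rfl | hv0
      · simp
      · exact (hstep v hv hv0).1
    have hve : ∀ v ∈ V, v * e = 0 := by
      intro v hv
      rcases eq_or_ne v 0 with rfl | hv0
      · simp
      · exact (hstep v hv hv0).2.1
    have hVV : ∀ v ∈ V, ∀ w ∈ V, v * w = 0 :=
      Stmt19Aux.VVzero Λ Ρ hΛ1 hΛ hΡ V memV hout2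
    -- assemble
    refine ⟨V, f, e, ?_, ?_, hee, ?_, ?_, ?_, hVV, ?_, ?_, ?_, ?_⟩
    · rw [hf]; abel
    · -- f * f = f
      have : (1 - e) * (1 - e) = 1 - e - e + e * e := by noncomm_ring
      rw [hf, this, hee]; abel
    · -- f * e = 0
      rw [hf, sub_mul, one_mul, hee, sub_self]
    · -- e * f = 0
      rw [hf, mul_sub, mul_one, hee, sub_self]
    · -- ∀ v ∈ V, f * v = 0 ∧ v * e = 0
      intro v hv
      constructor
      · rw [hf, sub_mul, one_mul, hev v hv, sub_self]
      · exact hve v hv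
    · -- span f ⊔ span e ⊔ V = ⊤
      rw [eq_top_iff']
      intro a
      have hdec : a = (Ρ a • f + Λ a • e) + (a - Λ a • e - Ρ a • f) := by abel
      rw [Submodule.mem_sup]
      refine ⟨Ρ a • f + Λ a • e, Submodule.mem_sup.2
        ⟨Ρ a • f, smul_mem _ _ (subset_span rfl), Λ a • e, smul_mem _ _ (subset_span rfl), rfl⟩,
        a - Λ a • e - Ρ a • f, ?_, by rw [← hdec]⟩
      rw [hV, Submodule.mem_inf, LinearMap.mem_ker, LinearMap.mem_ker]
      constructor
      · rw [map_sub, map_sub, map_smul, map_smul, hΛe, hΛf, smul_eq_mul, smul_eq_mul]; ring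
      · rw [map_sub, map_sub, map_smul, map_smul, hΡe, hΡf, smul_eq_mul, smul_eq_mul]; ring
    · -- span f ⊓ (span e ⊔ V) = ⊥
      rw [eq_bot_iff]
      rintro x ⟨hx1, hx2⟩
      obtain ⟨c, hc⟩ := mem_span_singleton.1 hx1
      obtain ⟨u1, hu1, u2, hu2, hu⟩ := Submodule.mem_sup.1 hx2
      obtain ⟨a, haa⟩ := mem_span_singleton.1 hu1
      obtain ⟨hΛu2, hΡu2⟩ := memV u2 hu2
      have hxa : x = a • e + u2 := by rw [← hu, ← haa]
      have hΛx : Λ x = a := by rw [hxa, map_add, map_smul, hΛe, hΛu2, smul_eq_mul, mul_one, add_zero]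
      have hΛx' : Λ x = 0 := by rw [← hc, map_smul, hΛf, smul_eq_mul, mul_zero]
      have hΡx : Ρ x = c := by rw [← hc, map_smul, hΡf, smul_eq_mul, mul_one]
      have hΡx' : Ρ x = 0 := by
        rw [hxa, map_add, map_smul, hΡe, hΡu2, smul_eq_mul, mul_zero, add_zero]
      have : c = 0 := by rw [← hΡx, hΡx']
      rw [← hc, this, zero_smul]
      exact zero_mem _
    · -- span e ⊓ (span f ⊔ V) = ⊥
      rw [eq_bot_iff]
      rintro x ⟨hx1, hx2⟩
      obtain ⟨c, hc⟩ := mem_span_singleton.1 hx1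
      obtain ⟨u1, hu1, u2, hu2, hu⟩ := Submodule.mem_sup.1 hx2
      obtain ⟨a, haa⟩ := mem_span_singleton.1 hu1
      obtain ⟨hΛu2, hΡu2⟩ := memV u2 hu2
      have hxa : x = a • f + u2 := by rw [← hu, ← haa]
      have hΡx : Ρ x = a := by rw [hxa, map_add, map_smul, hΡf, hΡu2, smul_eq_mul, mul_one, add_zero]
      have hΡx' : Ρ x = 0 := by rw [← hc, map_smul, hΡe, smul_eq_mul, mul_zero]
      have hΛx : Λ x = c := by rw [← hc, map_smul, hΛe, smul_eq_mul, mul_one]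
      have hΛx' : Λ x = 0 := by
        rw [hxa, map_add, map_smul, hΛf, hΛu2, smul_eq_mul, mul_zero, add_zero]
      have : c = 0 := by rw [← hΛx, hΛx']
      rw [← hc, this, zero_smul]
      exact zero_mem _
    · -- V ⊓ (span f ⊔ span e) = ⊥
      rw [eq_bot_iff]
      rintro x ⟨hx1, hx2⟩
      obtain ⟨hΛx, hΡx⟩ := memV x hx1
      obtain ⟨u1, hu1, u2, hu2, hu⟩ := Submodule.mem_sup.1 hx2
      obtain ⟨a, haa⟩ := mem_span_singleton.1 hu1
      obtain ⟨b, hbb⟩ := mem_span_singleton.1 hu2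
      have hxa : x = a • f + b • e := by rw [← hu, ← haa, ← hbb]
      have h1 : Λ x = b := by
        rw [hxa, map_add, map_smul, map_smul, hΛf, hΛe, smul_eq_mul, smul_eq_mul]; ring
      have h2 : Ρ x = a := by
        rw [hxa, map_add, map_smul, map_smul, hΡf, hΡe, smul_eq_mul, smul_eq_mul]; ring
      rw [hΛx] at h1; rw [hΡx] at h2
      rw [hxa, ← h1, ← h2]
      simp
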